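/- Let G be a group that is generated by two elements, simple, complete (i.e., G has trivial center and every automorphism of G is inner), torsion-free, and in which every nontrivial proper subgroup is infinite cyclic. Then every maximal cyclic subgroup of G is malnormal. -/

import Mathlib

/-- A group is Obraztsov if it is 2-generated, simple, complete (trivial center and all
automorphisms inner), torsion-free, and every nontrivial proper subgroup is infinite cyclic. -/
def IsObraztsov (G : Type*) [Group G] : Prop :=
  (∃ a b : G, Subgroup.closure {a, b} = ⊤) ∧
  IsSimpleGroup G ∧
  Subgroup.center G = ⊥ ∧
  (∀ φ : G ≃* G, ∃ g : G, ∀ y : G, φ y = g * y * g⁻¹) ∧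
  (∀ g : G, g ≠ 1 → ¬IsOfFinOrder g) ∧
  (∀ K : Subgroup G, K ≠ ⊥ → K ≠ ⊤ → IsCyclic K ∧ Infinite K)

/-- In an Obraztsov group, every maximal cyclic subgroup is malnormal. -/
theorem stmt_14 (G : Type*) [Group G] (hG : IsObraztsov G) :
    ∀ z : G,
      (∀ w : G, Subgroup.zpowers z ≤ Subgroup.zpowers w →
        Subgroup.zpowers z = Subgroup.zpowers w) →
      ∀ g : G, g ∉ Subgroup.zpowers z →
        ∀ y : G, y ∈ Subgroup.zpowers z → g * y * g⁻¹ ∈ Subgroup.zpowers z → y = 1 := by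
  obtain ⟨-, hsimple, hcenter, -, -, hsub⟩ := hG
  intro z hmax g hg y hy hconj
  by_contra hy1
  have hz : z ≠ 1 := by
    rintro rfl
    rw [Subgroup.zpowers_one_eq_bot, Subgroup.mem_bot] at hy
    exact hy1 hy
  -- any nontrivial proper subgroup containing ⟨z⟩ equals ⟨z⟩
  have cyc_eq : ∀ K : Subgroup G, K ≠ ⊥ → K ≠ ⊤ → Subgroup.zpowers z ≤ K →
      Subgroup.zpowers z = K := by
    intro K h1 h2 hle
    obtain ⟨hcyc, -⟩ := hsub K h1 h2
    obtain ⟨w, hw⟩ := hcyc.exists_generator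
    have hK : K = Subgroup.zpowers (w : G) := by
      apply le_antisymm
      · intro x hx
        obtain ⟨n, hn⟩ := hw ⟨x, hx⟩
        exact ⟨n, by simpa using congrArg Subtype.val hn⟩
      · exact Subgroup.zpowers_le.mpr w.2
    rw [hK] at hle ⊢
    exact hmax _ hle
  -- centralizers of nontrivial elements of ⟨z⟩ equal ⟨z⟩
  have key : ∀ x : G, x ≠ 1 → x ∈ Subgroup.zpowers z →
      Subgroup.centralizer {x} = Subgroup.zpowers z := by
    intro x hx hxz
    have hle : Subgroup.zpowers z ≤ Subgroup.centralizer {x} := by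
      rw [Subgroup.zpowers_le, Subgroup.mem_centralizer_iff]
      rintro h rfl
      obtain ⟨n, rfl⟩ := hxz
      exact ((Commute.refl z).zpow_left n).eq
    have hnb : Subgroup.centralizer {x} ≠ ⊥ := by
      intro h
      exact hz (by simpa [h, Subgroup.mem_bot] using hle (Subgroup.mem_zpowers z))
    have hnt : Subgroup.centralizer {x} ≠ ⊤ := by
      intro h
      have : x ∈ Subgroup.center G :=
        Subgroup.centralizer_eq_top_iff_subset.mp h rfl
      rw [hcenter, Subgroup.mem_bot] at this
      exact hx this
    exact (cyc_eq _ hnb hnt hle).symm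
  have hy'1 : g * y * g⁻¹ ≠ 1 := by
    intro h
    apply hy1
    have := congrArg (fun t => g⁻¹ * t * g) h
    simpa [mul_assoc] using this
  have hc1 := key y hy1 hy
  have hc2 := key (g * y * g⁻¹) hy'1 hconj
  -- g normalizes ⟨z⟩
  have hgn : g ∈ Subgroup.normalizer (Subgroup.zpowers z : Set G) := by
    rw [Subgroup.mem_normalizer_iff]
    intro h
    constructor
    · intro hh
      rw [← hc1, Subgroup.mem_centralizer_iff] at hh
      have hcomm : y * h = h * y := hh y rfl
      rw [← hc2, Subgroup.mem_centralizer_iff]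
      intro t ht
      rw [Set.mem_singleton_iff] at ht
      rw [ht]
      calc (g * y * g⁻¹) * (g * h * g⁻¹) = g * (y * h) * g⁻¹ := by group
        _ = g * (h * y) * g⁻¹ := by rw [hcomm]
        _ = (g * h * g⁻¹) * (g * y * g⁻¹) := by group
    · intro hh
      rw [← hc2, Subgroup.mem_centralizer_iff] at hh
      have hcomm : (g * y * g⁻¹) * (g * h * g⁻¹) = (g * h * g⁻¹) * (g * y * g⁻¹) :=
        hh _ rfl
      rw [← hc1, Subgroup.mem_centralizer_iff]
      intro t ht
      rw [Set.mem_singleton_iff] at ht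
      rw [ht]
      have : g * (y * h) * g⁻¹ = g * (h * y) * g⁻¹ := by
        calc g * (y * h) * g⁻¹ = (g * y * g⁻¹) * (g * h * g⁻¹) := by group
          _ = (g * h * g⁻¹) * (g * y * g⁻¹) := hcomm
          _ = g * (h * y) * g⁻¹ := by group
      have h2 : y * h = h * y := mul_left_cancel (mul_right_cancel this)
      exact h2
  -- the normalizer is proper and nontrivial, hence equals ⟨z⟩, contradiction
  have hnb : Subgroup.normalizer (Subgroup.zpowers z : Set G) ≠ ⊥ := by
    intro h
    exact hz (by simpa [h, Subgroup.mem_bot] using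
      Subgroup.le_normalizer (Subgroup.mem_zpowers z))
  have hnt : Subgroup.normalizer (Subgroup.zpowers z : Set G) ≠ ⊤ := by
    intro h
    have hnorm : (Subgroup.zpowers z).Normal := Subgroup.normalizer_eq_top_iff.mp h
    rcases hsimple.eq_bot_or_eq_top_of_normal _ hnorm with hb | ht
    · exact hz (by simpa using Subgroup.zpowers_eq_bot.mp hb)
    · exact hg (ht ▸ Subgroup.mem_top g)
  have := cyc_eq _ hnb hnt Subgroup.le_normalizer
  exact hg (this ▸ hgn)
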